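/- Let q be a symmetric bilinear form on a rational vector space, D_1,...,D_m with q(D_i, D_j) ≥ 0 for i ≠ j, D = ∑ a_i D_i with a_i > 0, P = ∑ b_i D_i the maximal element of M, and N = D − P with components N_1,...,N_n (those D_i appearing in N with positive coefficient). Then for every choice of nonnegative coefficients c_1,...,c_n not all zero, there exists an index j with q(∑_i c_i N_i, N_j) < 0. -/

import Mathlib

theorem stmt_9 {V : Type*} [AddCommGroup V] [Module ℚ V]
    (q : V →ₗ[ℚ] V →ₗ[ℚ] ℚ) (hsymm : ∀ x y, q x y = q y x)
    {m : ℕ} (D : Fin m → V) (hD : ∀ i j, i ≠ j → 0 ≤ q (D i) (D j))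
    (a : Fin m → ℚ) (ha : ∀ i, 0 < a i)
    (M : Set (Fin m → ℚ))
    (hM : M = {b : Fin m → ℚ | (∀ i, 0 ≤ b i ∧ b i ≤ a i) ∧
      ∀ j, 0 ≤ q (∑ i, b i • D i) (D j)})
    (b : Fin m → ℚ) (hb : b ∈ M) (hmax : ∀ b' ∈ M, ∀ i, b' i ≤ b i) :
    ∀ c : Fin m → ℚ, (∀ i, 0 ≤ c i) → (∀ i, c i ≠ 0 → 0 < a i - b i) →
      c ≠ 0 → ∃ j, 0 < a j - b j ∧ q (∑ i, c i • D i) (D j) < 0 := by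
  intro c hc hsupp hcne
  by_contra hcon
  push_neg at hcon
  obtain ⟨i₀, hi₀⟩ := Function.ne_iff.mp hcne
  simp only [Pi.zero_apply] at hi₀
  have hqc : ∀ j, 0 ≤ q (∑ i, c i • D i) (D j) := by
    intro j
    by_cases hj : 0 < a j - b j
    · exact hcon j hj
    · have hcj : c j = 0 := by
        by_contra h; exact hj (hsupp j h)
      have hexp : q (∑ i, c i • D i) (D j) = ∑ i, c i * q (D i) (D j) := by
        rw [map_sum]
        simp [LinearMap.sum_apply]
      rw [hexp]
      apply Finset.sum_nonneg
      intro i _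
      by_cases hij : i = j
      · subst hij; simp [hcj]
      · exact mul_nonneg (hc i) (hD i j hij)
  subst hM
  obtain ⟨hb1, hb2⟩ := hb
  haveI : Nonempty (Fin m) := ⟨i₀⟩
  set ε := Finset.univ.inf' Finset.univ_nonempty
      (fun i => if c i = 0 then 1 else (a i - b i) / c i) with hε
  have hεpos : 0 < ε := by
    rw [hε, Finset.lt_inf'_iff]
    intro i _
    split_ifs with h
    · norm_num
    · exact div_pos (hsupp i h) (lt_of_le_of_ne (hc i) (Ne.symm h))
  have hεle : ∀ i, ε * c i ≤ a i - b i := by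
    intro i
    by_cases h : c i = 0
    · have := (hb1 i).2
      simp [h]; linarith
    · have hci : 0 < c i := lt_of_le_of_ne (hc i) (Ne.symm h)
      have hle : ε ≤ (a i - b i) / c i := by
        rw [hε]
        have := Finset.inf'_le (f := fun i => if c i = 0 then 1 else (a i - b i) / c i)
          (Finset.mem_univ i)
        exact le_of_le_of_eq this (by simp [h])
      calc ε * c i ≤ ((a i - b i) / c i) * c i := by
            exact mul_le_mul_of_nonneg_right hle (hc i)
        _ = a i - b i := by field_simp
  have hb' : (fun i => b i + ε * c i) ∈
      {b : Fin m → ℚ | (∀ i, 0 ≤ b i ∧ b i ≤ a i) ∧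
        ∀ j, 0 ≤ q (∑ i, b i • D i) (D j)} := by
    constructor
    · intro i
      dsimp only
      constructor
      · have := mul_nonneg hεpos.le (hc i)
        linarith [(hb1 i).1]
      · linarith [hεle i]
    · intro j
      have hsplit : ∑ i, (b i + ε * c i) • D i
          = (∑ i, b i • D i) + ε • ∑ i, c i • D i := by
        rw [Finset.smul_sum, ← Finset.sum_add_distrib]
        congr 1; ext i
        rw [add_smul, smul_smul]
      rw [hsplit, map_add, LinearMap.add_apply, map_smul, LinearMap.smul_apply]
      have := mul_nonneg hεpos.le (hqc j)
      have h2 := hb2 j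
      simp only [smul_eq_mul]
      linarith
  have := hmax _ hb' i₀
  have : b i₀ + ε * c i₀ ≤ b i₀ := this
  have hpos : 0 < ε * c i₀ := mul_pos hεpos (lt_of_le_of_ne (hc i₀) (Ne.symm hi₀))
  linarith
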